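/- Let p be a real polynomial of degree n ≥ 2 with only real zeroes and d ≥ 2 distinct zeroes. Then the second derivative of R(x) = p(x)p''(x)/(p'(x))² is negative at every real point where p'(x) ≠ 0; i.e., R is strictly concave between consecutive poles. -/

import Mathlib

open Polynomial

namespace RAux


noncomputable def S (k : ℕ) (s : Multiset ℝ) : ℝ := (s.map (fun u => u ^ k)).sum

lemma S_cons (k : ℕ) (u : ℝ) (s : Multiset ℝ) : S k (u ::ₘ s) = u ^ k + S k s := by
  simp [S]

lemma S2_nonneg (s : Multiset ℝ) : 0 ≤ S 2 s := by
  induction s using Multiset.induction_on with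
  | empty => simp [S]
  | cons u s ih => rw [S_cons]; nlinarith [sq_nonneg u]

lemma quad_nonneg (s : Multiset ℝ) (w : ℝ) :
    0 ≤ S 2 s * w ^ 2 - 2 * S 3 s * w + S 4 s := by
  induction s using Multiset.induction_on with
  | empty => simp [S]
  | cons u s ih => rw [S_cons, S_cons, S_cons]; nlinarith [sq_nonneg (u * (w - u))]

lemma cs (s : Multiset ℝ) : S 3 s ^ 2 ≤ S 2 s * S 4 s := by
  induction s using Multiset.induction_on with
  | empty => simp [S]
  | cons u s ih =>
    have h := quad_nonneg s u
    rw [S_cons, S_cons, S_cons]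
    nlinarith [mul_nonneg (sq_nonneg u) h]

lemma cs_strict {x y : ℝ} (hx : x ≠ 0) (hy : y ≠ 0) (hxy : x ≠ y) (t : Multiset ℝ) :
    S 3 (x ::ₘ y ::ₘ t) ^ 2 < S 2 (x ::ₘ y ::ₘ t) * S 4 (x ::ₘ y ::ₘ t) := by
  have h1 := quad_nonneg t x
  have h2 := quad_nonneg t y
  have h3 := cs t
  have h4 : 0 < x ^ 2 * y ^ 2 * (x - y) ^ 2 := by
    have : x - y ≠ 0 := sub_ne_zero.2 hxy
    positivity
  simp only [S_cons]
  nlinarith [mul_nonneg (sq_nonneg x) h1, mul_nonneg (sq_nonneg y) h2]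

lemma S2_pos {x : ℝ} (hx : x ≠ 0) (t : Multiset ℝ) : 0 < S 2 (x ::ₘ t) := by
  rw [S_cons]
  have h1 : 0 < x ^ 2 := by positivity
  have h2 := S2_nonneg t
  linarith

lemma Q_pos {x y : ℝ} (hx : x ≠ 0) (hy : y ≠ 0) (hxy : x ≠ y) (t : Multiset ℝ) :
    0 < S 2 (x ::ₘ y ::ₘ t) ^ 3
        - 2 * S 1 (x ::ₘ y ::ₘ t) * S 2 (x ::ₘ y ::ₘ t) * S 3 (x ::ₘ y ::ₘ t)
        + S 1 (x ::ₘ y ::ₘ t) ^ 2 * S 4 (x ::ₘ y ::ₘ t) := by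
  set a := S 1 (x ::ₘ y ::ₘ t)
  set b := S 2 (x ::ₘ y ::ₘ t)
  set c := S 3 (x ::ₘ y ::ₘ t)
  set d := S 4 (x ::ₘ y ::ₘ t)
  have hb : 0 < b := S2_pos hx (y ::ₘ t)
  have hcs : c ^ 2 < b * d := cs_strict hx hy hxy t
  rcases eq_or_ne a 0 with ha | ha
  · rw [ha]; ring_nf; positivity
  · have ha2 : 0 < a ^ 2 := by positivity
    have key : 0 < b * (b ^ 3 - 2 * a * b * c + a ^ 2 * d) := by
      nlinarith [sq_nonneg (b ^ 2 - a * c), mul_pos ha2 (sub_pos.2 hcs)]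
    nlinarith [key, hb]


noncomputable def Pm (t : Multiset ℝ) : ℝ[X] := (t.map (fun r => X - C r)).prod

lemma Pm_cons (r : ℝ) (t : Multiset ℝ) : Pm (r ::ₘ t) = (X - C r) * Pm t := by
  simp [Pm]

noncomputable def A (k : ℕ) (x : ℝ) (t : Multiset ℝ) : ℝ :=
  S k (t.map fun r => (x - r)⁻¹)

lemma A_cons (k : ℕ) (x r : ℝ) (t : Multiset ℝ) :
    A k x (r ::ₘ t) = ((x - r)⁻¹) ^ k + A k x t := by
  simp [A, S_cons]

lemma eval_Pm (x : ℝ) (t : Multiset ℝ) :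
    eval x (Pm t) = (t.map (fun r => x - r)).prod := by
  simp [Pm, eval_multiset_prod, Multiset.map_map, Function.comp]

lemma eval_Pm_ne_zero {x : ℝ} {t : Multiset ℝ} (h : ∀ r ∈ t, x ≠ r) :
    eval x (Pm t) ≠ 0 := by
  rw [eval_Pm]
  refine Multiset.prod_ne_zero fun h0 => ?_
  obtain ⟨r, hr, h2⟩ := Multiset.mem_map.1 h0
  exact h r hr (sub_eq_zero.mp h2)

lemma der_mul_lin (r : ℝ) (q : ℝ[X]) :
    derivative ((X - C r) * q) = (X - C r) * derivative q + q := by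
  rw [derivative_mul]
  simp only [derivative_sub, derivative_X, derivative_C, sub_zero, one_mul]
  ring

lemma eval_derivs (x : ℝ) (t : Multiset ℝ) (h : ∀ r ∈ t, x ≠ r) :
    eval x (derivative (Pm t)) = eval x (Pm t) * A 1 x t ∧
    eval x (derivative (derivative (Pm t))) =
      eval x (Pm t) * (A 1 x t ^ 2 - A 2 x t) ∧
    eval x (derivative (derivative (derivative (Pm t)))) =
      eval x (Pm t) * (A 1 x t ^ 3 - 3 * A 1 x t * A 2 x t + 2 * A 3 x t) ∧
    eval x (derivative (derivative (derivative (derivative (Pm t))))) =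
      eval x (Pm t) * (A 1 x t ^ 4 - 6 * A 1 x t ^ 2 * A 2 x t + 3 * A 2 x t ^ 2
        + 8 * A 1 x t * A 3 x t - 6 * A 4 x t) := by
  induction t using Multiset.induction_on with
  | empty => simp [Pm, A, S]
  | cons r t ih =>
    have hr : x ≠ r := h r (Multiset.mem_cons_self r t)
    have ht : ∀ s ∈ t, x ≠ s := fun s hs => h s (Multiset.mem_cons_of_mem hs)
    obtain ⟨i1, i2, i3, i4⟩ := ih ht
    have hv : x - r ≠ 0 := sub_ne_zero.2 hr
    have e1 : derivative (Pm (r ::ₘ t)) = (X - C r) * derivative (Pm t) + Pm t := by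
      rw [Pm_cons, der_mul_lin]
    have e2 : derivative (derivative (Pm (r ::ₘ t))) =
        (X - C r) * derivative (derivative (Pm t)) + derivative (Pm t)
          + derivative (Pm t) := by
      rw [e1, derivative_add, der_mul_lin]
    have e3 : derivative (derivative (derivative (Pm (r ::ₘ t)))) =
        (X - C r) * derivative (derivative (derivative (Pm t)))
          + derivative (derivative (Pm t)) + derivative (derivative (Pm t))
          + derivative (derivative (Pm t)) := by
      rw [e2, derivative_add, derivative_add, der_mul_lin]
    have e4 : derivative (derivative (derivative (derivative (Pm (r ::ₘ t))))) =
        (X - C r) * derivative (derivative (derivative (derivative (Pm t))))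
          + derivative (derivative (derivative (Pm t)))
          + derivative (derivative (derivative (Pm t)))
          + derivative (derivative (derivative (Pm t)))
          + derivative (derivative (derivative (Pm t))) := by
      rw [e3, derivative_add, derivative_add, derivative_add, der_mul_lin]
    refine ⟨?_, ?_, ?_, ?_⟩
    · rw [e1, Pm_cons]
      simp only [A_cons, eval_add, eval_mul, eval_sub, eval_X, eval_C, i1]
      field_simp
      ring
    · rw [e2, Pm_cons]
      simp only [A_cons, eval_add, eval_mul, eval_sub, eval_X, eval_C, i1, i2]
      field_simp
      ring
    · rw [e3, Pm_cons]
      simp only [A_cons, eval_add, eval_mul, eval_sub, eval_X, eval_C, i1, i2, i3]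
      field_simp
      ring
    · rw [e4, Pm_cons]
      simp only [A_cons, eval_add, eval_mul, eval_sub, eval_X, eval_C, i1, i2, i3, i4]
      field_simp
      ring


lemma A_def (k : ℕ) (x : ℝ) (t : Multiset ℝ) :
    A k x t = S k (t.map fun r => (x - r)⁻¹) := rfl

noncomputable def Nval (p : ℝ[X]) (y : ℝ) : ℝ :=
  3 * eval y (derivative p) ^ 2 * eval y (derivative (derivative p)) ^ 2
    - 2 * eval y (derivative p) ^ 3 * eval y (derivative (derivative (derivative p)))
    + 6 * eval y p * eval y (derivative p) * eval y (derivative (derivative p))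
        * eval y (derivative (derivative (derivative p)))
    - 6 * eval y p * eval y (derivative (derivative p)) ^ 3
    - eval y p * eval y (derivative p) ^ 2
        * eval y (derivative (derivative (derivative (derivative p))))

noncomputable def g1 (p : ℝ[X]) : ℝ → ℝ := fun y =>
  (eval y (derivative p) ^ 2 * eval y (derivative (derivative p))
    + eval y p * eval y (derivative p) * eval y (derivative (derivative (derivative p)))
    - 2 * (eval y p * eval y (derivative (derivative p)) ^ 2))
    / eval y (derivative p) ^ 3

lemma hasDerivAt_R (p : ℝ[X]) (y : ℝ) (hy : eval y (derivative p) ≠ 0) :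
    HasDerivAt (fun z => eval z p * eval z (derivative (derivative p))
      / eval z (derivative p) ^ 2) (g1 p y) y := by
  have h0 := p.hasDerivAt y
  have h1 := (derivative p).hasDerivAt y
  have h2 := (derivative (derivative p)).hasDerivAt y
  have hden : eval y (derivative p) ^ 2 ≠ 0 := pow_ne_zero _ hy
  have H := (h0.mul h2).div (h1.pow 2) hden
  refine H.congr_deriv ?_
  unfold g1
  simp only [Pi.pow_apply, Pi.mul_apply, Pi.add_apply, Pi.sub_apply]
  field_simp
  ring

lemma hasDerivAt_g1 (p : ℝ[X]) (y : ℝ) (hy : eval y (derivative p) ≠ 0) :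
    HasDerivAt (g1 p) (-(Nval p y) / eval y (derivative p) ^ 4) y := by
  have h0 := p.hasDerivAt y
  have h1 := (derivative p).hasDerivAt y
  have h2 := (derivative (derivative p)).hasDerivAt y
  have h3 := (derivative (derivative (derivative p))).hasDerivAt y
  have h4 := (derivative (derivative (derivative (derivative p)))).hasDerivAt y
  have hden : eval y (derivative p) ^ 3 ≠ 0 := pow_ne_zero _ hy
  have Hnum := (((h1.pow 2).mul h2).add ((h0.mul h1).mul h3)).sub
    ((h0.mul (h2.pow 2)).const_mul 2)
  have H := Hnum.div (h1.pow 3) hden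
  refine H.congr_deriv ?_
  unfold Nval
  simp only [Pi.pow_apply, Pi.mul_apply, Pi.add_apply, Pi.sub_apply]
  field_simp
  ring

end RAux

theorem R_second_deriv_neg (p : ℝ[X]) (n : ℕ) (hn : p.natDegree = n) (hn2 : 2 ≤ n)
    (hreal : ∀ z : ℂ, (p.map (algebraMap ℝ ℂ)).IsRoot z → z.im = 0)
    (hdist : ∃ x y : ℝ, x ≠ y ∧ p.IsRoot x ∧ p.IsRoot y)
    (R : ℝ → ℝ)
    (hR : R = fun x =>
      p.eval x * (derivative (derivative p)).eval x / ((derivative p).eval x) ^ 2) :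
    ∀ x : ℝ, (derivative p).eval x ≠ 0 → deriv (deriv R) x < 0 := by
  classical
  have hp0 : p ≠ 0 := by
    intro h
    rw [h, natDegree_zero] at hn
    omega
  have hk : p.leadingCoeff ≠ 0 := leadingCoeff_ne_zero.2 hp0
  have hfinj : Function.Injective (algebraMap ℝ ℂ) := (algebraMap ℝ ℂ).injective
  have hsplC : Splits (p.map (algebraMap ℝ ℂ)) := IsAlgClosed.splits _
  have hcardC : Multiset.card (p.map (algebraMap ℝ ℂ)).roots = n := by
    rw [← hsplC.natDegree_eq_card_roots, natDegree_map, hn]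
  have hmapne : p.map (algebraMap ℝ ℂ) ≠ 0 := (Polynomial.map_ne_zero_iff hfinj).2 hp0
  have hle : (p.map (algebraMap ℝ ℂ)).roots ≤ p.roots.map (algebraMap ℝ ℂ) := by
    refine Multiset.le_iff_count.2 fun b => ?_
    by_cases hb : b ∈ (p.map (algebraMap ℝ ℂ)).roots
    · have him : b.im = 0 := hreal b (mem_roots'.1 hb).2
      have hbre : (algebraMap ℝ ℂ) b.re = b := Complex.ext (by simp) (by simp [him])
      refine le_of_eq ?_
      calc Multiset.count b (p.map (algebraMap ℝ ℂ)).roots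
          = rootMultiplicity b (p.map (algebraMap ℝ ℂ)) := count_roots _
        _ = rootMultiplicity ((algebraMap ℝ ℂ) b.re) (p.map (algebraMap ℝ ℂ)) := by
            rw [hbre]
        _ = rootMultiplicity b.re p := (eq_rootMultiplicity_map hfinj b.re).symm
        _ = Multiset.count b.re p.roots := (count_roots _).symm
        _ = Multiset.count ((algebraMap ℝ ℂ) b.re) (p.roots.map (algebraMap ℝ ℂ)) :=
            (Multiset.count_map_eq_count' _ _ hfinj _).symm
        _ = Multiset.count b (p.roots.map (algebraMap ℝ ℂ)) := by rw [hbre]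
    · rw [Multiset.count_eq_zero.2 hb]
      exact Nat.zero_le _
  have hcard : Multiset.card p.roots = p.natDegree := by
    have h1 := Multiset.card_le_card hle
    rw [Multiset.card_map, hcardC] at h1
    have h2 := p.card_roots'
    omega
  have hspl : Splits p := splits_iff_card_roots.2 hcard
  have hfact : p = C p.leadingCoeff * RAux.Pm p.roots := hspl.eq_prod_roots
  set t := p.roots with htdef
  set k := p.leadingCoeff with hkdef
  have hd1 : derivative p = C k * derivative (RAux.Pm t) := by
    conv_lhs => rw [hfact]
    rw [derivative_C_mul]
  have hd2 : derivative (derivative p) = C k * derivative (derivative (RAux.Pm t)) := by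
    rw [hd1, derivative_C_mul]
  have hd3 : derivative (derivative (derivative p))
      = C k * derivative (derivative (derivative (RAux.Pm t))) := by
    rw [hd2, derivative_C_mul]
  have hd4 : derivative (derivative (derivative (derivative p)))
      = C k * derivative (derivative (derivative (derivative (RAux.Pm t)))) := by
    rw [hd3, derivative_C_mul]
  intro x hx
  -- Step: second derivative formula
  have hU : IsOpen {y : ℝ | eval y (derivative p) ≠ 0} := by
    have : {y : ℝ | eval y (derivative p) ≠ 0}
        = (fun y => eval y (derivative p)) ⁻¹' {(0:ℝ)}ᶜ := rfl
    rw [this]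
    exact (Polynomial.continuous _).isOpen_preimage _ isOpen_compl_singleton
  have hEq : Set.EqOn (deriv R) (RAux.g1 p) {y : ℝ | eval y (derivative p) ≠ 0} := by
    intro y hy
    have := RAux.hasDerivAt_R p y hy
    rw [← hR] at this
    exact this.deriv
  have hev : deriv R =ᶠ[nhds x] RAux.g1 p :=
    Filter.eventuallyEq_of_mem (hU.mem_nhds hx) hEq
  have hd2R : deriv (deriv R) x = -(RAux.Nval p x) / eval x (derivative p) ^ 4 := by
    rw [hev.deriv_eq, (RAux.hasDerivAt_g1 p x hx).deriv]
  rw [hd2R]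
  have hpow : 0 < eval x (derivative p) ^ 4 := by positivity
  refine div_neg_of_neg_of_pos (neg_lt_zero.2 ?_) hpow
  -- Core: Nval p x > 0
  by_cases hp : eval x p = 0
  · -- x is a simple root of p
    have hxt : x ∈ t := mem_roots'.2 ⟨hp0, hp⟩
    set t' := t.erase x with ht'def
    have htx : t = x ::ₘ t' := (Multiset.cons_erase hxt).symm
    have m1 : derivative (RAux.Pm t)
        = (X - C x) * derivative (RAux.Pm t') + RAux.Pm t' := by
      rw [htx, RAux.Pm_cons, RAux.der_mul_lin]
    have m2 : derivative (derivative (RAux.Pm t))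
        = (X - C x) * derivative (derivative (RAux.Pm t'))
          + derivative (RAux.Pm t') + derivative (RAux.Pm t') := by
      rw [m1, derivative_add, RAux.der_mul_lin]
    have m3 : derivative (derivative (derivative (RAux.Pm t)))
        = (X - C x) * derivative (derivative (derivative (RAux.Pm t')))
          + derivative (derivative (RAux.Pm t'))
          + derivative (derivative (RAux.Pm t'))
          + derivative (derivative (RAux.Pm t')) := by
      rw [m2, derivative_add, derivative_add, RAux.der_mul_lin]
    have hxnt' : x ∉ t' := by
      intro hmem
      apply hx
      have htx2 : t' = x ::ₘ t'.erase x := (Multiset.cons_erase hmem).symm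
      have hz : eval x (RAux.Pm t') = 0 := by
        rw [htx2, RAux.Pm_cons]
        simp
      have : eval x (derivative (RAux.Pm t)) = 0 := by
        rw [m1]
        simp [hz]
      rw [hd1, eval_mul, eval_C, this, mul_zero]
    have hnr' : ∀ r ∈ t', x ≠ r := fun r hr heq => hxnt' (heq ▸ hr)
    have he' : eval x (RAux.Pm t') ≠ 0 := RAux.eval_Pm_ne_zero hnr'
    obtain ⟨j1, j2, -, -⟩ := RAux.eval_derivs x t' hnr'
    have w1 : eval x (derivative (RAux.Pm t)) = eval x (RAux.Pm t') := by
      rw [m1]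
      simp
    have w2 : eval x (derivative (derivative (RAux.Pm t)))
        = 2 * eval x (derivative (RAux.Pm t')) := by
      rw [m2]
      simp only [eval_add, eval_mul, eval_sub, eval_X, eval_C, sub_self, zero_mul, zero_add]
      ring
    have w3 : eval x (derivative (derivative (derivative (RAux.Pm t))))
        = 3 * eval x (derivative (derivative (RAux.Pm t'))) := by
      rw [m3]
      simp only [eval_add, eval_mul, eval_sub, eval_X, eval_C, sub_self, zero_mul, zero_add]
      ring
    -- t' is nonempty
    have hcardt' : Multiset.card t' ≠ 0 := by
      have : Multiset.card t = n := by rw [htdef, hcard, hn]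
      rw [htx] at this
      simp only [Multiset.card_cons] at this
      omega
    obtain ⟨r0, hr0⟩ := Multiset.card_pos_iff_exists_mem.1 (Nat.pos_of_ne_zero hcardt')
    have hbpos : 0 < RAux.A 2 x t' := by
      rw [RAux.A_def]
      have : t' = r0 ::ₘ t'.erase r0 := (Multiset.cons_erase hr0).symm
      rw [this, Multiset.map_cons]
      exact RAux.S2_pos (inv_ne_zero (sub_ne_zero.2 (hnr' r0 hr0))) _
    have hke : k * eval x (RAux.Pm t') ≠ 0 := mul_ne_zero hk he'
    have hke4 : 0 < (k * eval x (RAux.Pm t')) ^ 4 := by positivity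
    rw [RAux.Nval, hp, hd3, hd2, hd1]
    simp only [eval_mul, eval_C]
    rw [w1, w2, w3, j1, j2]
    nlinarith [mul_pos hke4 hbpos, mul_nonneg hke4.le (sq_nonneg (RAux.A 1 x t'))]
  · -- x is not a root of p
    have hnr : ∀ r ∈ t, x ≠ r := by
      intro r hrm heq
      apply hp
      have : IsRoot p r := (mem_roots'.1 hrm).2
      rw [heq]
      exact this
    have he : eval x (RAux.Pm t) ≠ 0 := RAux.eval_Pm_ne_zero hnr
    obtain ⟨j1, j2, j3, j4⟩ := RAux.eval_derivs x t hnr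
    have v0 : eval x p = k * eval x (RAux.Pm t) := by
      conv_lhs => rw [hfact]
      rw [eval_mul, eval_C]
    obtain ⟨x0, y0, hxy0, hrx0, hry0⟩ := hdist
    have hx0t : x0 ∈ t := mem_roots'.2 ⟨hp0, hrx0⟩
    have hy0t : y0 ∈ t := mem_roots'.2 ⟨hp0, hry0⟩
    have hy0e : y0 ∈ t.erase x0 := (Multiset.mem_erase_of_ne hxy0.symm).2 hy0t
    have hts : t = x0 ::ₘ y0 ::ₘ (t.erase x0).erase y0 := by
      rw [Multiset.cons_erase hy0e, Multiset.cons_erase hx0t]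
    have hmap : t.map (fun r => (x - r)⁻¹)
        = (x - x0)⁻¹ ::ₘ (x - y0)⁻¹ ::ₘ
          ((t.erase x0).erase y0).map (fun r => (x - r)⁻¹) := by
      conv_lhs => rw [hts]
      simp [Multiset.map_cons]
    have hu0 : (x - x0)⁻¹ ≠ 0 := inv_ne_zero (sub_ne_zero.2 (hnr x0 hx0t))
    have hu1 : (x - y0)⁻¹ ≠ 0 := inv_ne_zero (sub_ne_zero.2 (hnr y0 hy0t))
    have huu : (x - x0)⁻¹ ≠ (x - y0)⁻¹ := by
      intro hq
      apply hxy0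
      have := inv_inj.1 hq
      linarith
    have hQ := RAux.Q_pos hu0 hu1 huu (((t.erase x0).erase y0).map fun r => (x - r)⁻¹)
    have hAk : ∀ kk : ℕ, RAux.S kk ((x - x0)⁻¹ ::ₘ (x - y0)⁻¹ ::ₘ
        ((t.erase x0).erase y0).map (fun r => (x - r)⁻¹)) = RAux.A kk x t := by
      intro kk
      rw [RAux.A_def, hmap]
    rw [hAk 1, hAk 2, hAk 3, hAk 4] at hQ
    have hke : k * eval x (RAux.Pm t) ≠ 0 := mul_ne_zero hk he
    have hke4 : 0 < (k * eval x (RAux.Pm t)) ^ 4 := by positivity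
    rw [RAux.Nval, v0, hd4, hd3, hd2, hd1]
    simp only [eval_mul, eval_C]
    rw [j1, j2, j3, j4]
    nlinarith [mul_pos hke4 hQ]
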